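/- Let p, q ∈ ℝ, a := q·i, b := q·(j − iℓ − jℓ), c := q·(1 + k + ℓ), and let C be the 3×3 octonionic Hermitian matrix with rows (p, a, conj b), (conj a, p, c), (b, conj c, p). Then v = (j, ℓ, 0) is a right eigenvector of C with non-real eigenvalue λ = p + q·(ℓ·k) = p − q·kℓ, i.e. C·v = v·λ. Moreover the associator of the off-diagonal entries is [a, b, c] = 2q³·(ℓ − k); in particular, when q ≠ 0, the imaginary part Im(λ) = −q·kℓ is not a real multiple of [a, b, c]. -/

import Mathlib

noncomputable section

open Quaternion

/-- The octonions, realized as the Cayley–Dickson double of the real quaternions: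
pairs of quaternions. -/
abbrev 𝕆 : Type := ℍ[ℝ] × ℍ[ℝ]

namespace Octonion

/-- Cayley–Dickson multiplication: `(a, b)·(c, d) = (a·c − conj(d)·b, d·a + b·conj(c))`. -/
def omul (x y : 𝕆) : 𝕆 :=
  (x.1 * y.1 - star y.2 * x.2, y.2 * x.1 + x.2 * star y.1)

/-- Octonionic conjugation: `conj (a, b) = (conj a, −b)`. -/
def oconj (x : 𝕆) : 𝕆 := (star x.1, -x.2)

/-- The embedding of the reals, `r ↦ (r, 0)`. -/
def oR (r : ℝ) : 𝕆 := ((r : ℍ[ℝ]), 0)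

/-- The unit octonion `1 = (1, 0)`. -/
def o1 : 𝕆 := oR 1

/-- The associator `[a,b,c] = (a·b)·c − a·(b·c)`. -/
def oassoc (a b c : 𝕆) : 𝕆 := omul (omul a b) c - omul a (omul b c)

/-- The inner product: the real number with `(a·conj b + b·conj a)/2 = (a ⋅ b)·1`. -/
def odot (x y : 𝕆) : ℝ := (omul x (oconj y) + omul y (oconj x)).1.re / 2

/-- The squared norm `|x|²`, the real number with `x·conj x = |x|²·1`. -/
def onormSq (x : 𝕆) : ℝ := odot x x

/-- The real part of an octonion, as a real number. -/
def oreR (x : 𝕆) : ℝ := x.1.re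

/-- The imaginary part `Im(x) = (x − conj x)/2`. -/
def oIm (x : 𝕆) : 𝕆 := (2:ℝ)⁻¹ • (x - oconj x)

/-- The imaginary units. -/
def oi : 𝕆 := (⟨0,1,0,0⟩, 0)
def oj : 𝕆 := (⟨0,0,1,0⟩, 0)
def ok : 𝕆 := (⟨0,0,0,1⟩, 0)
def ol : 𝕆 := (0, 1)
def oil : 𝕆 := (0, ⟨0,1,0,0⟩)
def ojl : 𝕆 := (0, ⟨0,0,1,0⟩)
def okl : 𝕆 := (0, ⟨0,0,0,1⟩)

end Octonion


open Octonion

/-- The action of a `3×3` octonionic matrix on a column vector: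
`(B·v)ₐ = ∑ᵦ Bₐᵦ·vᵦ`. -/
def mvec (B : Fin 3 → Fin 3 → 𝕆) (u : Fin 3 → 𝕆) : Fin 3 → 𝕆 :=
  fun α => ∑ β, omul (B α β) (u β)


lemma oext (x y : 𝕆) (h1 : x.1.re = y.1.re) (h2 : x.1.imI = y.1.imI)
    (h3 : x.1.imJ = y.1.imJ) (h4 : x.1.imK = y.1.imK) (h5 : x.2.re = y.2.re)
    (h6 : x.2.imI = y.2.imI) (h7 : x.2.imJ = y.2.imJ) (h8 : x.2.imK = y.2.imK) : x = y :=
  Prod.ext (QuaternionAlgebra.ext h1 h2 h3 h4) (QuaternionAlgebra.ext h5 h6 h7 h8)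

lemma qmk (x y z w : ℝ) : (⟨x, y, z, w⟩ : ℍ[ℝ]) = (Quaternion.equivTuple ℝ).symm ![x, y, z, w] :=
  rfl

lemma qre (x y z w : ℝ) : ((Quaternion.equivTuple ℝ).symm ![x, y, z, w]).re = x := rfl
lemma qimI (x y z w : ℝ) : ((Quaternion.equivTuple ℝ).symm ![x, y, z, w]).imI = y := rfl
lemma qimJ (x y z w : ℝ) : ((Quaternion.equivTuple ℝ).symm ![x, y, z, w]).imJ = z := rfl
lemma qimK (x y z w : ℝ) : ((Quaternion.equivTuple ℝ).symm ![x, y, z, w]).imK = w := rfl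

set_option maxHeartbeats 2000000 in
/-- Example 3: the matrix `C` with `a = qi`, `b = q(j − iℓ − jℓ)`,
`c = q(1 + k + ℓ)` admits the right eigenvector `v = (j, ℓ, 0)` with non-real
eigenvalue `λ = p + q·(ℓk) = p − q·kℓ`; the associator of the off-diagonal
entries is `[a,b,c] = 2q³(ℓ − k)`, and for `q ≠ 0` the imaginary part
`Im(λ) = −q·kℓ` is not a real multiple of `[a,b,c]`. -/
theorem example3 (p q : ℝ) (a b c : 𝕆)
    (ha : a = q • oi) (hb : b = q • (oj - oil - ojl)) (hc : c = q • (o1 + ok + ol)) :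
    mvec ![![oR p, a, oconj b], ![oconj a, oR p, c], ![b, oconj c, oR p]] ![oj, ol, 0]
        = (fun α => omul (![oj, ol, 0] α) (oR p + q • omul ol ok))
    ∧ oR p + q • omul ol ok = oR p - q • okl
    ∧ oassoc a b c = (2 * q^3) • (ol - ok)
    ∧ oIm (oR p + q • omul ol ok) = -(q • okl)
    ∧ (q ≠ 0 → ∀ r : ℝ, oIm (oR p + q • omul ol ok) ≠ r • oassoc a b c) := by
  subst ha hb hc
  refine ⟨?_, ?_, ?_, ?_, ?_⟩
  · funext α
    fin_cases α <;>
    · apply oext <;>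
      · simp only [mvec, Fin.sum_univ_three, Fin.zero_eta, Fin.mk_one, Fin.reduceFinMk,
          Fin.isValue, Matrix.cons_val_zero, Matrix.cons_val_one, Matrix.head_cons,
          Matrix.cons_val_two, Matrix.tail_cons,
          omul, oconj, oR, o1, oi, oj, ok, ol, oil, ojl, okl, qmk, qre, qimI, qimJ, qimK,
          Quaternion.re_mul, Quaternion.imI_mul, Quaternion.imJ_mul, Quaternion.imK_mul,
          Quaternion.re_add, Quaternion.imI_add, Quaternion.imJ_add, Quaternion.imK_add,
          Quaternion.re_sub, Quaternion.imI_sub, Quaternion.imJ_sub, Quaternion.imK_sub,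
          Quaternion.re_neg, Quaternion.imI_neg, Quaternion.imJ_neg, Quaternion.imK_neg,
          Quaternion.re_smul, Quaternion.imI_smul, Quaternion.imJ_smul, Quaternion.imK_smul,
          Quaternion.re_star, Quaternion.imI_star, Quaternion.imJ_star, Quaternion.imK_star,
          Quaternion.re_coe, Quaternion.imI_coe, Quaternion.imJ_coe, Quaternion.imK_coe,
          Quaternion.re_zero, Quaternion.imI_zero, Quaternion.imJ_zero, Quaternion.imK_zero,
          Quaternion.re_one, Quaternion.imI_one, Quaternion.imJ_one, Quaternion.imK_one,
          Prod.fst_add, Prod.snd_add, Prod.fst_sub, Prod.snd_sub, Prod.fst_zero,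
          Prod.snd_zero, Prod.smul_fst, Prod.smul_snd, Prod.fst_neg, Prod.snd_neg,
          smul_eq_mul]
        ring
  · apply oext <;>
    · simp only [omul, oconj, oR, o1, oi, oj, ok, ol, oil, ojl, okl, qmk, qre, qimI, qimJ, qimK,
          Quaternion.re_mul, Quaternion.imI_mul, Quaternion.imJ_mul, Quaternion.imK_mul,
          Quaternion.re_add, Quaternion.imI_add, Quaternion.imJ_add, Quaternion.imK_add,
          Quaternion.re_sub, Quaternion.imI_sub, Quaternion.imJ_sub, Quaternion.imK_sub,
          Quaternion.re_neg, Quaternion.imI_neg, Quaternion.imJ_neg, Quaternion.imK_neg,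
          Quaternion.re_smul, Quaternion.imI_smul, Quaternion.imJ_smul, Quaternion.imK_smul,
          Quaternion.re_star, Quaternion.imI_star, Quaternion.imJ_star, Quaternion.imK_star,
          Quaternion.re_coe, Quaternion.imI_coe, Quaternion.imJ_coe, Quaternion.imK_coe,
          Quaternion.re_zero, Quaternion.imI_zero, Quaternion.imJ_zero, Quaternion.imK_zero,
          Quaternion.re_one, Quaternion.imI_one, Quaternion.imJ_one, Quaternion.imK_one,
          Prod.fst_add, Prod.snd_add, Prod.fst_sub, Prod.snd_sub, Prod.fst_zero,
          Prod.snd_zero, Prod.smul_fst, Prod.smul_snd, Prod.fst_neg, Prod.snd_neg,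
          smul_eq_mul]
      ring
  · apply oext <;>
    · simp only [oassoc, omul, oconj, oR, o1, oi, oj, ok, ol, oil, ojl, okl, qmk, qre, qimI, qimJ, qimK,
          Quaternion.re_mul, Quaternion.imI_mul, Quaternion.imJ_mul, Quaternion.imK_mul,
          Quaternion.re_add, Quaternion.imI_add, Quaternion.imJ_add, Quaternion.imK_add,
          Quaternion.re_sub, Quaternion.imI_sub, Quaternion.imJ_sub, Quaternion.imK_sub,
          Quaternion.re_neg, Quaternion.imI_neg, Quaternion.imJ_neg, Quaternion.imK_neg,
          Quaternion.re_smul, Quaternion.imI_smul, Quaternion.imJ_smul, Quaternion.imK_smul,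
          Quaternion.re_star, Quaternion.imI_star, Quaternion.imJ_star, Quaternion.imK_star,
          Quaternion.re_coe, Quaternion.imI_coe, Quaternion.imJ_coe, Quaternion.imK_coe,
          Quaternion.re_zero, Quaternion.imI_zero, Quaternion.imJ_zero, Quaternion.imK_zero,
          Quaternion.re_one, Quaternion.imI_one, Quaternion.imJ_one, Quaternion.imK_one,
          Prod.fst_add, Prod.snd_add, Prod.fst_sub, Prod.snd_sub, Prod.fst_zero,
          Prod.snd_zero, Prod.smul_fst, Prod.smul_snd, Prod.fst_neg, Prod.snd_neg,
          smul_eq_mul]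
      ring
  · apply oext <;>
    · simp only [oIm, omul, oconj, oR, o1, oi, oj, ok, ol, oil, ojl, okl, qmk, qre, qimI, qimJ, qimK,
          Quaternion.re_mul, Quaternion.imI_mul, Quaternion.imJ_mul, Quaternion.imK_mul,
          Quaternion.re_add, Quaternion.imI_add, Quaternion.imJ_add, Quaternion.imK_add,
          Quaternion.re_sub, Quaternion.imI_sub, Quaternion.imJ_sub, Quaternion.imK_sub,
          Quaternion.re_neg, Quaternion.imI_neg, Quaternion.imJ_neg, Quaternion.imK_neg,
          Quaternion.re_smul, Quaternion.imI_smul, Quaternion.imJ_smul, Quaternion.imK_smul,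
          Quaternion.re_star, Quaternion.imI_star, Quaternion.imJ_star, Quaternion.imK_star,
          Quaternion.re_coe, Quaternion.imI_coe, Quaternion.imJ_coe, Quaternion.imK_coe,
          Quaternion.re_zero, Quaternion.imI_zero, Quaternion.imJ_zero, Quaternion.imK_zero,
          Quaternion.re_one, Quaternion.imI_one, Quaternion.imJ_one, Quaternion.imK_one,
          Prod.fst_add, Prod.snd_add, Prod.fst_sub, Prod.snd_sub, Prod.fst_zero,
          Prod.snd_zero, Prod.smul_fst, Prod.smul_snd, Prod.fst_neg, Prod.snd_neg,
          smul_eq_mul]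
      ring
  · intro hq r h
    have h2 := congrArg (fun x : 𝕆 => x.2.imK) h
    simp only [oIm, oassoc, omul, oconj, oR, o1, oi, oj, ok, ol, oil, ojl, okl, qmk, qre, qimI, qimJ, qimK,
          Quaternion.re_mul, Quaternion.imI_mul, Quaternion.imJ_mul, Quaternion.imK_mul,
          Quaternion.re_add, Quaternion.imI_add, Quaternion.imJ_add, Quaternion.imK_add,
          Quaternion.re_sub, Quaternion.imI_sub, Quaternion.imJ_sub, Quaternion.imK_sub,
          Quaternion.re_neg, Quaternion.imI_neg, Quaternion.imJ_neg, Quaternion.imK_neg,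
          Quaternion.re_smul, Quaternion.imI_smul, Quaternion.imJ_smul, Quaternion.imK_smul,
          Quaternion.re_star, Quaternion.imI_star, Quaternion.imJ_star, Quaternion.imK_star,
          Quaternion.re_coe, Quaternion.imI_coe, Quaternion.imJ_coe, Quaternion.imK_coe,
          Quaternion.re_zero, Quaternion.imI_zero, Quaternion.imJ_zero, Quaternion.imK_zero,
          Quaternion.re_one, Quaternion.imI_one, Quaternion.imJ_one, Quaternion.imK_one,
          Prod.fst_add, Prod.snd_add, Prod.fst_sub, Prod.snd_sub, Prod.fst_zero,
          Prod.snd_zero, Prod.smul_fst, Prod.smul_snd, Prod.fst_neg, Prod.snd_neg,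
          smul_eq_mul] at h2
    ring_nf at h2
    exact hq (by linarith)
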